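/- If Y is determined by Z, i.e., Y = f(Z) for a measurable function f, then Y is conditionally independent of 1{A=a} given Z, and hence the population weighted estimator of mean group outcome is unbiased: E[P(A=a|Z)Y]/E[P(A=a|Z)] = E[Y|A=a]. -/

import Mathlib

open MeasureTheory

/-- If `Y = f(Z)` for a bounded measurable `f`, then `Y` is
conditionally independent of `1{A=a}` given `Z` (in the sense
`E[1{A=a}·Y | Z] = E[1{A=a}|Z]·E[Y|Z]` a.s., where σ(Z) is the comap σ-algebra of `Z`),
and hence the population weighted estimator of the mean group outcome is unbiased:
`E[P(A=a|Z)·Y]/E[P(A=a|Z)] = E[Y | A=a]`. Here `s = {A=a}`. -/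

theorem weighted_estimator_unbiased_of_determined
    {Ω γ : Type*} {mΩ : MeasurableSpace Ω} {mγ : MeasurableSpace γ}
    (μ : Measure Ω) [IsProbabilityMeasure μ]
    (Z : Ω → γ) (hZ : Measurable Z)
    (f : γ → ℝ) (hf : Measurable f) (C : ℝ) (hfbdd : ∀ x, |f x| ≤ C)
    (Y : Ω → ℝ) (hY : Y = fun ω => f (Z ω))
    (s : Set Ω) (hs : MeasurableSet s) (hpa : 0 < (μ s).toReal) :
    ((μ[fun ω => s.indicator (fun _ => (1:ℝ)) ω * Y ω | MeasurableSpace.comap Z mγ])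
        =ᵐ[μ] fun ω =>
          (μ[s.indicator (fun _ => (1:ℝ)) | MeasurableSpace.comap Z mγ]) ω
            * (μ[Y | MeasurableSpace.comap Z mγ]) ω)
    ∧ (∫ ω, (μ[s.indicator (fun _ => (1:ℝ)) | MeasurableSpace.comap Z mγ]) ω * Y ω ∂μ) /
          (∫ ω, (μ[s.indicator (fun _ => (1:ℝ)) | MeasurableSpace.comap Z mγ]) ω ∂μ)
        = (∫ ω in s, Y ω ∂μ) / (μ s).toReal := by
  have hm : MeasurableSpace.comap Z mγ ≤ mΩ := hZ.comap_le
  have hZm : Measurable[MeasurableSpace.comap Z mγ] Z := fun t ht => ⟨t, ht, rfl⟩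
  have hYm : StronglyMeasurable[MeasurableSpace.comap Z mγ] Y := by
    rw [hY]; exact (hf.comp hZm).stronglyMeasurable
  have hYbd : ∀ ω, ‖Y ω‖ ≤ C := by
    intro ω; rw [hY]; simpa [Real.norm_eq_abs] using hfbdd (Z ω)
  have hYint : Integrable Y μ := by
    refine Integrable.mono' (integrable_const C) ((hYm.mono hm).aestronglyMeasurable) ?_
    exact Filter.Eventually.of_forall hYbd
  have hIndInt : Integrable (s.indicator (fun _ => (1:ℝ))) μ :=
    (integrable_const (1:ℝ)).indicator hs
  have key : (μ[fun ω => Y ω * s.indicator (fun _ => (1:ℝ)) ω | MeasurableSpace.comap Z mγ])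
      =ᵐ[μ] fun ω => Y ω
        * (μ[s.indicator (fun _ => (1:ℝ)) | MeasurableSpace.comap Z mγ]) ω := by
    have h := condExp_stronglyMeasurable_mul_of_bound (μ := μ) hm hYm hIndInt C
      (Filter.Eventually.of_forall hYbd)
    exact h
  have hcY : μ[Y | MeasurableSpace.comap Z mγ] = Y :=
    condExp_of_stronglyMeasurable hm hYm hYint
  constructor
  · have heq : (fun ω => s.indicator (fun _ => (1:ℝ)) ω * Y ω)
        = fun ω => Y ω * s.indicator (fun _ => (1:ℝ)) ω := by ext ω; ring
    rw [heq]
    refine key.trans (Filter.Eventually.of_forall fun ω => ?_)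
    rw [hcY]; ring
  · have hYind : (fun ω => Y ω * s.indicator (fun _ => (1:ℝ)) ω) = s.indicator Y := by
      ext ω
      by_cases hω : ω ∈ s <;>
        simp [Set.indicator_of_mem, Set.indicator_of_notMem, hω]
    have hnum : (∫ ω, (μ[s.indicator (fun _ => (1:ℝ)) | MeasurableSpace.comap Z mγ]) ω * Y ω ∂μ)
        = ∫ ω in s, Y ω ∂μ := by
      have h1 : (∫ ω, (μ[s.indicator (fun _ => (1:ℝ)) | MeasurableSpace.comap Z mγ]) ω * Y ω ∂μ)
          = ∫ ω, (μ[fun ω => Y ω * s.indicator (fun _ => (1:ℝ)) ω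
              | MeasurableSpace.comap Z mγ]) ω ∂μ := by
        refine integral_congr_ae (key.mono fun ω hω => ?_)
        rw [hω]; ring
      rw [h1, integral_condExp hm, hYind]
      exact integral_indicator hs
    have hden : (∫ ω, (μ[s.indicator (fun _ => (1:ℝ)) | MeasurableSpace.comap Z mγ]) ω ∂μ)
        = (μ s).toReal := by
      rw [integral_condExp hm]
      exact integral_indicator_one (μ := μ) hs
    rw [hnum, hden]
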